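/- If M ⊆ ℤ² is piecewise syndetic and x, y ∈ ℤ, z ∈ ℤ \ {0}, then the set {(A₁ + x·A₂ + y, z·A₂) : (A₁, A₂) ∈ M} is piecewise syndetic in ℤ². -/

import Mathlib

/-- A subset of an abelian group is thick if it contains a translate of every finite set. -/
def Thick {G : Type*} [AddCommGroup G] (T : Set G) : Prop :=
  ∀ F : Finset G, ∃ g : G, ∀ f ∈ F, g + f ∈ T

/-- A subset is piecewise syndetic if a finite union of its translates is thick. -/
def PWSyn {G : Type*} [AddCommGroup G] (S : Set G) : Prop :=
  ∃ F : Finset G, Thick {x : G | ∃ t ∈ F, x + t ∈ S}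

/-- The affine-map lemma: if M ⊆ ℤ² is piecewise syndetic, so is its image under
(A₁, A₂) ↦ (A₁ + x·A₂ + y, z·A₂) for z ≠ 0. -/
theorem pwSyn_affine_image (M : Set (ℤ × ℤ)) (hM : PWSyn M) (x y z : ℤ) (hz : z ≠ 0) :
    PWSyn {p : ℤ × ℤ | ∃ q ∈ M, p = (q.1 + x * q.2 + y, z * q.2)} := by
  obtain ⟨F, hF⟩ := hM
  have hnpos : (0 : ℤ) < (z.natAbs : ℤ) := by
    have := Int.natAbs_pos.mpr hz
    exact_mod_cast this
  set n : ℤ := (z.natAbs : ℤ) with hn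
  refine ⟨(F ×ˢ Finset.range z.natAbs).image
      (fun tj => (tj.1.1 + x * tj.1.2 + y, z * tj.1.2 + (tj.2 : ℤ))), ?_⟩
  intro E
  set ψ : ℤ × ℤ → ℤ × ℤ :=
    fun e => (e.1 - x * ((e.2 + (-e.2) % n) / z), (e.2 + (-e.2) % n) / z) with hψ
  obtain ⟨h, hh⟩ := hF (E.image ψ)
  refine ⟨(h.1 + x * h.2, z * h.2), ?_⟩
  intro e he
  obtain ⟨t, htF, htM⟩ := hh _ (Finset.mem_image_of_mem ψ he)
  set j : ℤ := (-e.2) % n with hj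
  have hj0 : 0 ≤ j := Int.emod_nonneg _ (ne_of_gt hnpos)
  have hjlt : j < n := Int.emod_lt_of_pos _ hnpos
  have hdvd : z ∣ e.2 + j := by
    have hndvd : n ∣ e.2 + j := by
      refine ⟨-((-e.2) / n), ?_⟩
      have := Int.emod_add_mul_ediv (-e.2) n
      rw [hj]; linarith
    rw [hn] at hndvd
    exact (Int.natAbs_dvd).mp hndvd
  set c : ℤ := (e.2 + j) / z with hc
  have hzc : z * c = e.2 + j := Int.mul_ediv_cancel' hdvd
  refine ⟨(t.1 + x * t.2 + y, z * t.2 + j), ?_, ?_⟩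
  · refine Finset.mem_image.mpr ⟨(t, j.toNat), ?_, ?_⟩
    · refine Finset.mem_product.mpr ⟨htF, Finset.mem_range.mpr ?_⟩
      omega
    · have hjt : ((j.toNat : ℤ)) = j := Int.toNat_of_nonneg hj0
      simp [hjt]
  · refine ⟨h + ψ e + t, htM, ?_⟩
    have hψ1 : (ψ e).1 = e.1 - x * c := rfl
    have hψ2 : (ψ e).2 = c := rfl
    apply Prod.ext
    · simp [Prod.fst_add, hψ1, hψ2]; ring
    · simp only [Prod.snd_add, hψ2]
      have : z * (h.2 + c + t.2) = z * h.2 + (e.2 + j) + z * t.2 := by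
        rw [mul_add, mul_add, hzc]
      simp [this]; ring_nf
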